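/- Assume m ≥ 2. Then for every t ∈ V_m: 2·ξ⁺_2(t) = ξ⁻_1(t)·(ξ⁻_1(t) − ξ⁻_1(−1)) and 2·ξ⁻_2(t) = ξ⁺_1(t)·(ξ⁺_1(t) − ξ⁺_1(1)) in R, where ξ⁻_1(−1) and ξ⁺_1(1) are the values of ξ⁻_1 at vertex −1 and of ξ⁺_1 at vertex 1, respectively. -/

import Mathlib

noncomputable section

open Finset MvPolynomial

/-- The coefficient ring `R = ℚ[α,δ]`, realized as polynomials in two variables. -/
abbrev Rpoly : Type := MvPolynomial (Fin 2) ℚ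

/-- The variable `α`. -/
def va : Rpoly := X 0

/-- The variable `δ`. -/
def vd : Rpoly := X 1

/-- `P⁻(a,b) = ∏_{k=a}^{b} (−α + k·δ)`. -/
def Pneg (a b : ℤ) : Rpoly :=
  ∏ k ∈ Finset.Icc a b, (-va + MvPolynomial.C (k : ℚ) * vd)

/-- `P⁺(a,b) = ∏_{k=a}^{b} (α + k·δ)`. -/
def Ppos (a b : ℤ) : Rpoly :=
  ∏ k ∈ Finset.Icc a b, (va + MvPolynomial.C (k : ℚ) * vd)

/-- Binomial coefficient `C(n,q)` (all uses have `n ≥ 0`). -/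
def B (n : ℤ) (q : ℕ) : ℚ := (n.toNat).choose q

/-- The Knutson–Tao class `ξ⁺_q = ξ(m+q, m−q)`, as a function on vertices `t`
(the vertex `t` encodes the pair `(m+t, m−t)`). -/
def xiP (m : ℤ) (q : ℕ) (t : ℤ) : Rpoly :=
  if (q : ℤ) ≤ t ∧ t ≤ m then
    MvPolynomial.C (B (⌈((t : ℚ) - (q : ℚ) + 1) / 2⌉ + q - 1) q) *
      Pneg (⌈((t : ℚ) - (q : ℚ) + 1) / 2⌉ - 1) (⌈((t : ℚ) - (q : ℚ) + 1) / 2⌉ + q - 2)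
  else if -m ≤ t ∧ t ≤ -((q : ℤ) + 1) then
    MvPolynomial.C (B (⌈(-(t : ℚ) - (q : ℚ)) / 2⌉ + q - 1) q) *
      Ppos (⌈(-(t : ℚ) - (q : ℚ)) / 2⌉ + 1) (⌈(-(t : ℚ) - (q : ℚ)) / 2⌉ + q)
  else 0

/-- The Knutson–Tao class `ξ⁻_q = ξ(m−q, m+q)`. -/
def xiM (m : ℤ) (q : ℕ) (t : ℤ) : Rpoly :=
  if (q : ℤ) + 1 ≤ t ∧ t ≤ m then
    MvPolynomial.C (B (⌈((t : ℚ) - (q : ℚ)) / 2⌉ + q - 1) q) *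
      Pneg (⌈((t : ℚ) - (q : ℚ)) / 2⌉) (⌈((t : ℚ) - (q : ℚ)) / 2⌉ + q - 1)
  else if -m ≤ t ∧ t ≤ -(q : ℤ) then
    MvPolynomial.C (B (⌈(-(t : ℚ) - (q : ℚ) + 1) / 2⌉ + q - 1) q) *
      Ppos (⌈(-(t : ℚ) - (q : ℚ) + 1) / 2⌉) (⌈(-(t : ℚ) - (q : ℚ) + 1) / 2⌉ + q - 1)
  else 0

/-- The weight of the vertex `t`: `w(t) = ((1−2t)/2)·α + (t(t−1)/2)·δ`. -/
def w (t : ℤ) : Rpoly :=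
  MvPolynomial.C ((1 - 2 * (t : ℚ)) / 2) * va +
    MvPolynomial.C (((t : ℚ) * ((t : ℚ) - 1)) / 2) * vd

/- ### auxiliary lemmas -/

lemma Pneg_single (a : ℤ) : Pneg a a = -va + MvPolynomial.C (a:ℚ) * vd := by
  simp [Pneg]

lemma Ppos_single (a : ℤ) : Ppos a a = va + MvPolynomial.C (a:ℚ) * vd := by
  simp [Ppos]

lemma Pneg_pair (a : ℤ) : Pneg a (a+1) =
    (-va + MvPolynomial.C (a:ℚ) * vd) * (-va + MvPolynomial.C ((a:ℚ)+1) * vd) := by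
  have h : Finset.Icc a (a+1) = {a, a+1} := by
    ext x; simp [Finset.mem_Icc]; omega
  rw [Pneg, h, Finset.prod_pair (by omega)]
  push_cast; ring

lemma Ppos_pair (a : ℤ) : Ppos a (a+1) =
    (va + MvPolynomial.C (a:ℚ) * vd) * (va + MvPolynomial.C ((a:ℚ)+1) * vd) := by
  have h : Finset.Icc a (a+1) = {a, a+1} := by
    ext x; simp [Finset.mem_Icc]; omega
  rw [Ppos, h, Finset.prod_pair (by omega)]
  push_cast; ring

lemma Pneg_pair' (a b : ℤ) (h : b = a + 1) : Pneg a b =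
    (-va + MvPolynomial.C (a:ℚ) * vd) * (-va + MvPolynomial.C ((a:ℚ)+1) * vd) := by
  subst h; exact Pneg_pair a

lemma Ppos_pair' (a b : ℤ) (h : b = a + 1) : Ppos a b =
    (va + MvPolynomial.C (a:ℚ) * vd) * (va + MvPolynomial.C ((a:ℚ)+1) * vd) := by
  subst h; exact Ppos_pair a

lemma B_one (n : ℤ) (h : 0 ≤ n) : B n 1 = (n : ℚ) := by
  simp [B, Nat.choose_one_right]
  exact_mod_cast congrArg (Int.cast : ℤ → ℚ) (Int.toNat_of_nonneg h)

lemma B_two (n : ℤ) (h : 0 ≤ n) : B n 2 = (n:ℚ) * ((n:ℚ) - 1) / 2 := by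
  rw [B, Nat.cast_choose_two]
  rw [show ((n.toNat : ℚ)) = (n:ℚ) by exact_mod_cast congrArg (Int.cast : ℤ → ℚ) (Int.toNat_of_nonneg h)]

/- evaluation lemmas -/
lemma xiM_posval (m : ℤ) (q : ℕ) (t : ℤ) (h1 : (q:ℤ) + 1 ≤ t) (h2 : t ≤ m) :
    xiM m q t =
    MvPolynomial.C (B (⌈((t : ℚ) - (q : ℚ)) / 2⌉ + q - 1) q) *
      Pneg (⌈((t : ℚ) - (q : ℚ)) / 2⌉) (⌈((t : ℚ) - (q : ℚ)) / 2⌉ + q - 1) := by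
  rw [xiM, if_pos ⟨h1, h2⟩]

lemma xiM_negval (m : ℤ) (q : ℕ) (t : ℤ) (h0 : ¬((q:ℤ) + 1 ≤ t ∧ t ≤ m))
    (h1 : -m ≤ t) (h2 : t ≤ -(q:ℤ)) :
    xiM m q t =
    MvPolynomial.C (B (⌈(-(t : ℚ) - (q : ℚ) + 1) / 2⌉ + q - 1) q) *
      Ppos (⌈(-(t : ℚ) - (q : ℚ) + 1) / 2⌉) (⌈(-(t : ℚ) - (q : ℚ) + 1) / 2⌉ + q - 1) := by
  rw [xiM, if_neg h0, if_pos ⟨h1, h2⟩]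

lemma xiM_zero (m : ℤ) (q : ℕ) (t : ℤ) (h0 : ¬((q:ℤ) + 1 ≤ t ∧ t ≤ m))
    (h1 : ¬(-m ≤ t ∧ t ≤ -(q:ℤ))) : xiM m q t = 0 := by
  rw [xiM, if_neg h0, if_neg h1]

lemma xiP_posval (m : ℤ) (q : ℕ) (t : ℤ) (h1 : (q:ℤ) ≤ t) (h2 : t ≤ m) :
    xiP m q t =
    MvPolynomial.C (B (⌈((t : ℚ) - (q : ℚ) + 1) / 2⌉ + q - 1) q) *
      Pneg (⌈((t : ℚ) - (q : ℚ) + 1) / 2⌉ - 1) (⌈((t : ℚ) - (q : ℚ) + 1) / 2⌉ + q - 2) := by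
  rw [xiP, if_pos ⟨h1, h2⟩]

lemma xiP_negval (m : ℤ) (q : ℕ) (t : ℤ) (h0 : ¬((q:ℤ) ≤ t ∧ t ≤ m))
    (h1 : -m ≤ t) (h2 : t ≤ -((q:ℤ)+1)) :
    xiP m q t =
    MvPolynomial.C (B (⌈(-(t : ℚ) - (q : ℚ)) / 2⌉ + q - 1) q) *
      Ppos (⌈(-(t : ℚ) - (q : ℚ)) / 2⌉ + 1) (⌈(-(t : ℚ) - (q : ℚ)) / 2⌉ + q) := by
  rw [xiP, if_neg h0, if_pos ⟨h1, h2⟩]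

lemma xiP_zero (m : ℤ) (q : ℕ) (t : ℤ) (h0 : ¬((q:ℤ) ≤ t ∧ t ≤ m))
    (h1 : ¬(-m ≤ t ∧ t ≤ -((q:ℤ)+1))) : xiP m q t = 0 := by
  rw [xiP, if_neg h0, if_neg h1]

/- special values -/
lemma xiM_neg_one (m : ℤ) (hm : 1 ≤ m) : xiM m 1 (-1) = va + vd := by
  rw [xiM_negval m 1 (-1) (by omega) (by omega) (by omega)]
  have hc : ⌈(-((-1:ℤ):ℚ) - ((1:ℕ):ℚ) + 1) / 2⌉ = 1 := by
    push_cast; rw [Int.ceil_eq_iff] <;> norm_num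
  rw [hc]
  norm_num [Ppos_single, B_one]

lemma xiP_one (m : ℤ) (hm : 1 ≤ m) : xiP m 1 1 = -va := by
  rw [xiP_posval m 1 1 (by omega) (by omega)]
  have hc : ⌈(((1:ℤ):ℚ) - ((1:ℕ):ℚ) + 1) / 2⌉ = 1 := by
    push_cast; rw [Int.ceil_eq_iff] <;> norm_num
  rw [hc]
  norm_num [Pneg_single, B_one]

/- ring identities -/
lemma alg1pos (c : ℚ) :
    2 * (MvPolynomial.C ((c+1)*c/2) *
      ((-va + MvPolynomial.C (c-1) * vd) * (-va + MvPolynomial.C c * vd)))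
    = (MvPolynomial.C c * (-va + MvPolynomial.C c * vd)) *
      (MvPolynomial.C c * (-va + MvPolynomial.C c * vd) - (va + vd)) := by
  have h2 : (2 : Rpoly) = MvPolynomial.C 2 := (map_ofNat MvPolynomial.C 2).symm
  rw [h2, ← mul_assoc, ← MvPolynomial.C_mul,
    show (2:ℚ) * ((c+1)*c/2) = (c+1)*c by ring, MvPolynomial.C_mul,
    MvPolynomial.C_add, MvPolynomial.C_sub, MvPolynomial.C_1]
  ring

lemma alg1neg (c : ℚ) :
    2 * (MvPolynomial.C (c*(c-1)/2) *
      ((va + MvPolynomial.C c * vd) * (va + MvPolynomial.C (c+1) * vd)))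
    = (MvPolynomial.C c * (va + MvPolynomial.C c * vd)) *
      (MvPolynomial.C c * (va + MvPolynomial.C c * vd) - (va + vd)) := by
  have h2 : (2 : Rpoly) = MvPolynomial.C 2 := (map_ofNat MvPolynomial.C 2).symm
  rw [h2, ← mul_assoc, ← MvPolynomial.C_mul,
    show (2:ℚ) * (c*(c-1)/2) = c*(c-1) by ring, MvPolynomial.C_mul,
    MvPolynomial.C_add, MvPolynomial.C_sub, MvPolynomial.C_1]
  ring

lemma alg2pos (c : ℚ) :
    2 * (MvPolynomial.C (c*(c-1)/2) *
      ((-va + MvPolynomial.C (c-1) * vd) * (-va + MvPolynomial.C c * vd)))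
    = (MvPolynomial.C c * (-va + MvPolynomial.C (c-1) * vd)) *
      (MvPolynomial.C c * (-va + MvPolynomial.C (c-1) * vd) - (-va)) := by
  have h2 : (2 : Rpoly) = MvPolynomial.C 2 := (map_ofNat MvPolynomial.C 2).symm
  rw [h2, ← mul_assoc, ← MvPolynomial.C_mul,
    show (2:ℚ) * (c*(c-1)/2) = c*(c-1) by ring, MvPolynomial.C_mul,
    MvPolynomial.C_sub, MvPolynomial.C_1]
  ring

lemma alg2neg (c : ℚ) :
    2 * (MvPolynomial.C ((c+1)*c/2) *
      ((va + MvPolynomial.C c * vd) * (va + MvPolynomial.C (c+1) * vd)))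
    = (MvPolynomial.C c * (va + MvPolynomial.C (c+1) * vd)) *
      (MvPolynomial.C c * (va + MvPolynomial.C (c+1) * vd) - (-va)) := by
  have h2 : (2 : Rpoly) = MvPolynomial.C 2 := (map_ofNat MvPolynomial.C 2).symm
  rw [h2, ← mul_assoc, ← MvPolynomial.C_mul,
    show (2:ℚ) * ((c+1)*c/2) = (c+1)*c by ring, MvPolynomial.C_mul,
    MvPolynomial.C_add, MvPolynomial.C_1]
  ring

/- ### identity 1 -/
lemma id1 (m : ℤ) (hm : 2 ≤ m) (t : ℤ) (ht1 : -m ≤ t) (ht2 : t ≤ m) :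
    2 * xiP m 2 t = xiM m 1 t * (xiM m 1 t - xiM m 1 (-1)) := by
  rcases le_or_gt 2 t with h2 | h2
  · -- t ≥ 2
    set c : ℤ := ⌈((t:ℚ)-1)/2⌉ with hc
    have hcpos : 1 ≤ c := by
      have h0 : (0:ℤ) < c := by
        rw [hc]; apply Int.lt_ceil.mpr
        have : (2:ℚ) ≤ (t:ℚ) := by exact_mod_cast h2
        push_cast; linarith
      omega
    have e1 : ((t:ℚ) - ((1:ℕ):ℚ)) / 2 = ((t:ℚ)-1)/2 := by norm_num
    have e2 : ((t:ℚ) - ((2:ℕ):ℚ) + 1) / 2 = ((t:ℚ)-1)/2 := by push_cast; ring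
    rw [xiM_posval m 1 t (by omega) ht2,
        xiP_posval m 2 t (by omega) ht2, e1, e2, ← hc]
    rw [show c + ((2:ℕ):ℤ) - 1 = c + 1 by push_cast; ring,
        show c + ((2:ℕ):ℤ) - 2 = (c - 1) + 1 by push_cast; ring,
        show c + ((1:ℕ):ℤ) - 1 = c by push_cast; ring]
    rw [B_two (c+1) (by omega), B_one c (by omega), Pneg_pair, Pneg_single,
        xiM_neg_one m (by omega)]
    push_cast
    rw [show ((c:ℚ)+1)*(((c:ℚ)+1)-1)/2 = ((c:ℚ)+1)*(c:ℚ)/2 by ring,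
        show ((c:ℚ)-1)+1 = (c:ℚ) by ring]
    exact alg1pos (c:ℚ)
  · rcases le_or_gt t (-3) with h3 | h3
    · -- t ≤ -3
      set c : ℤ := ⌈(-(t:ℚ))/2⌉ with hc
      have hcpos : 2 ≤ c := by
        have h0 : (1:ℤ) < c := by
          rw [hc]; apply Int.lt_ceil.mpr
          have : (t:ℚ) ≤ -3 := by exact_mod_cast h3
          push_cast; linarith
        omega
      have e1 : (-(t:ℚ) - ((1:ℕ):ℚ) + 1) / 2 = (-(t:ℚ))/2 := by push_cast; ring
      have e2 : (-(t:ℚ) - ((2:ℕ):ℚ)) / 2 = (-(t:ℚ))/2 - 1 := by push_cast; ring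
      rw [xiM_negval m 1 t (by omega) ht1 (by omega),
          xiP_negval m 2 t (by omega) ht1 (by omega),
          e1, e2, Int.ceil_sub_one, ← hc]
      rw [show c - 1 + ((2:ℕ):ℤ) - 1 = c by push_cast; ring,
          show c - 1 + ((2:ℕ):ℤ) = c + 1 by push_cast; ring,
          show c - 1 + 1 = c by ring,
          show c + ((1:ℕ):ℤ) - 1 = c by push_cast; ring]
      rw [B_two c (by omega), B_one c (by omega), Ppos_pair, Ppos_single,
          xiM_neg_one m (by omega)]
      push_cast
      exact alg1neg (c:ℚ)
    · -- -2 ≤ t ≤ 1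
      interval_cases t
      · -- t = -2
        rw [xiP_zero m 2 (-2) (by omega) (by omega)]
        have h : xiM m 1 (-2) = xiM m 1 (-1) := by
          rw [xiM_negval m 1 (-2) (by omega) (by omega) (by omega),
              xiM_neg_one m (by omega)]
          have hc : ⌈(-((-2:ℤ):ℚ) - ((1:ℕ):ℚ) + 1) / 2⌉ = 1 := by
            push_cast; rw [Int.ceil_eq_iff] <;> norm_num
          rw [hc]
          norm_num [Ppos_single, B_one]
        rw [h, sub_self, mul_zero, mul_zero]
      · -- t = -1
        rw [xiP_zero m 2 (-1) (by omega) (by omega),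
            sub_self, mul_zero, mul_zero]
      · rw [xiP_zero m 2 0 (by omega) (by omega),
            xiM_zero m 1 0 (by omega) (by omega)]
        ring
      · rw [xiP_zero m 2 1 (by omega) (by omega),
            xiM_zero m 1 1 (by omega) (by omega)]
        ring

/- ### identity 2 -/
lemma id2 (m : ℤ) (hm : 2 ≤ m) (t : ℤ) (ht1 : -m ≤ t) (ht2 : t ≤ m) :
    2 * xiM m 2 t = xiP m 1 t * (xiP m 1 t - xiP m 1 1) := by
  rcases le_or_gt 3 t with h3 | h3
  · -- t ≥ 3
    set c : ℤ := ⌈(t:ℚ)/2⌉ with hc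
    have hcpos : 2 ≤ c := by
      have h0 : (1:ℤ) < c := by
        rw [hc]; apply Int.lt_ceil.mpr
        have : (3:ℚ) ≤ (t:ℚ) := by exact_mod_cast h3
        push_cast; linarith
      omega
    have e1 : ((t:ℚ) - ((1:ℕ):ℚ) + 1) / 2 = (t:ℚ)/2 := by push_cast; ring
    have e2 : ((t:ℚ) - ((2:ℕ):ℚ)) / 2 = (t:ℚ)/2 - 1 := by push_cast; ring
    rw [xiP_posval m 1 t (by omega) ht2,
        xiM_posval m 2 t (by omega) ht2,
        e1, e2, Int.ceil_sub_one, ← hc]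
    rw [show c - 1 + ((2:ℕ):ℤ) - 1 = c by push_cast; ring,
        show c + ((1:ℕ):ℤ) - 1 = c by push_cast; ring,
        show c + ((1:ℕ):ℤ) - 2 = c - 1 by push_cast; ring]
    rw [B_two c (by omega), B_one c (by omega), Pneg_pair' (c-1) c (by ring),
        Pneg_single, xiP_one m (by omega)]
    push_cast
    rw [show ((c:ℚ)-1)+1 = (c:ℚ) by ring]
    exact alg2pos (c:ℚ)
  · rcases le_or_gt t (-2) with h2 | h2
    · -- t ≤ -2
      set c : ℤ := ⌈(-(t:ℚ)-1)/2⌉ with hc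
      have hcpos : 1 ≤ c := by
        have h0 : (0:ℤ) < c := by
          rw [hc]; apply Int.lt_ceil.mpr
          have : (t:ℚ) ≤ -2 := by exact_mod_cast h2
          push_cast; linarith
        omega
      have e1 : (-(t:ℚ) - ((1:ℕ):ℚ)) / 2 = (-(t:ℚ)-1)/2 := by push_cast; ring
      have e2 : (-(t:ℚ) - ((2:ℕ):ℚ) + 1) / 2 = (-(t:ℚ)-1)/2 := by push_cast; ring
      rw [xiP_negval m 1 t (by omega) ht1 (by omega),
          xiM_negval m 2 t (by omega) ht1 (by omega),
          e1, e2, ← hc]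
      rw [show c + ((2:ℕ):ℤ) - 1 = c + 1 by push_cast; ring,
          show c + ((1:ℕ):ℤ) - 1 = c by push_cast; ring,
          show c + ((1:ℕ):ℤ) = c + 1 by push_cast; ring]
      rw [B_two (c+1) (by omega), B_one c (by omega), Ppos_pair, Ppos_single,
          xiP_one m (by omega)]
      push_cast
      rw [show ((c:ℚ)+1)*(((c:ℚ)+1)-1)/2 = ((c:ℚ)+1)*(c:ℚ)/2 by ring]
      exact alg2neg (c:ℚ)
    · -- -1 ≤ t ≤ 2
      interval_cases t
      · rw [xiM_zero m 2 (-1) (by omega) (by omega),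
            xiP_zero m 1 (-1) (by omega) (by omega)]
        ring
      · rw [xiM_zero m 2 0 (by omega) (by omega),
            xiP_zero m 1 0 (by omega) (by omega)]
        ring
      · rw [xiM_zero m 2 1 (by omega) (by omega),
            sub_self, mul_zero, mul_zero]
      · rw [xiM_zero m 2 2 (by omega) (by omega)]
        have h : xiP m 1 2 = xiP m 1 1 := by
          rw [xiP_posval m 1 2 (by omega) (by omega), xiP_one m (by omega)]
          have hc : ⌈(((2:ℤ):ℚ) - ((1:ℕ):ℚ) + 1) / 2⌉ = 1 := by
            push_cast; rw [Int.ceil_eq_iff] <;> norm_num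
          rw [hc]
          norm_num [Pneg_single, B_one]
        rw [h, sub_self, mul_zero, mul_zero]

/-- for `m ≥ 2`, `2·ξ⁺_2 = ξ⁻_1·(ξ⁻_1 − ξ⁻_1(−1))` and
`2·ξ⁻_2 = ξ⁺_1·(ξ⁺_1 − ξ⁺_1(1))` pointwise on `V_m`. -/
theorem statement5 (m : ℕ) (hm : 2 ≤ m) (t : ℤ)
    (ht1 : -(m : ℤ) ≤ t) (ht2 : t ≤ (m : ℤ)) :
    2 * xiP m 2 t = xiM m 1 t * (xiM m 1 t - xiM m 1 (-1)) ∧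
    2 * xiM m 2 t = xiP m 1 t * (xiP m 1 t - xiP m 1 1) := by
  exact ⟨id1 m (by exact_mod_cast hm) t ht1 ht2, id2 m (by exact_mod_cast hm) t ht1 ht2⟩
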